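/- Under the weighted-ensemble selection in a single bin u (multinomial resampling of N(u) children with probabilities ω_i/ω(u), children weights ω(u)/N(u)), the second moment satisfies E[(sum over children of (ω(u)/N(u)) g_{parent})^2] = (1 - 1/N(u)) (sum_i ω_i g_i)^2 + (ω(u)/N(u)) sum_i ω_i g_i^2. -/

import Mathlib

open scoped BigOperators
open Polynomial Finset



private lemma coeff_mul_one' (f g : ℝ[X]) :
    (f * g).coeff 1 = f.coeff 0 * g.coeff 1 + f.coeff 1 * g.coeff 0 := by
  rw [Polynomial.coeff_mul, Finset.Nat.sum_antidiagonal_eq_sum_range_succ_mk]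
  simp [Finset.sum_range_succ]

private lemma coeff_mul_two (f g : ℝ[X]) :
    (f * g).coeff 2 = f.coeff 0 * g.coeff 2 + f.coeff 1 * g.coeff 1 + f.coeff 2 * g.coeff 0 := by
  rw [Polynomial.coeff_mul, Finset.Nat.sum_antidiagonal_eq_sum_range_succ_mk]
  simp [Finset.sum_range_succ]
  try ring

private lemma pow_coeffs (c : ℝ) (k : ℕ) :
    ((1 + C c * X) ^ k).coeff 0 = 1 ∧
    ((1 + C c * X) ^ k).coeff 1 = (k : ℝ) * c ∧
    2 * ((1 + C c * X) ^ k).coeff 2 = ((k : ℝ) * c) ^ 2 - (k : ℝ) * c ^ 2 := by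
  induction k with
  | zero => simp [Polynomial.coeff_one]
  | succ k ih =>
    obtain ⟨h0, h1, h2⟩ := ih
    rw [pow_succ]
    refine ⟨?_, ?_, ?_⟩
    · rw [Polynomial.mul_coeff_zero, h0]; simp
    · rw [coeff_mul_one', h0, h1]
      simp [Polynomial.coeff_one]
      ring
    · rw [coeff_mul_two, h0]
      have hc1 : (1 + C c * X).coeff 1 = c := by simp [Polynomial.coeff_one]
      have hc2 : (1 + C c * X).coeff 2 = 0 := by
        simp [Polynomial.coeff_one, Polynomial.coeff_C_mul, Polynomial.coeff_X]
      have hc0 : (1 + C c * X).coeff 0 = 1 := by simp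
      rw [hc1, hc2, h1, hc0]
      push_cast
      nlinarith [h2]

private lemma prod_coeffs {ι : Type*} [DecidableEq ι] (s : Finset ι) (c : ι → ℝ) (k : ι → ℕ) :
    (∏ i ∈ s, (1 + C (c i) * X) ^ (k i)).coeff 0 = 1 ∧
    (∏ i ∈ s, (1 + C (c i) * X) ^ (k i)).coeff 1 = ∑ i ∈ s, (k i : ℝ) * c i ∧
    2 * (∏ i ∈ s, (1 + C (c i) * X) ^ (k i)).coeff 2 =
      (∑ i ∈ s, (k i : ℝ) * c i) ^ 2 - ∑ i ∈ s, (k i : ℝ) * c i ^ 2 := by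
  induction s using Finset.cons_induction with
  | empty => simp [Polynomial.coeff_one]
  | cons a s ha ih =>
    obtain ⟨h0, h1, h2⟩ := ih
    obtain ⟨g0, g1, g2⟩ := pow_coeffs (c a) (k a)
    rw [Finset.prod_cons, Finset.sum_cons, Finset.sum_cons]
    refine ⟨?_, ?_, ?_⟩
    · rw [Polynomial.mul_coeff_zero, h0, g0, mul_one]
    · rw [coeff_mul_one', h0, h1, g0, g1]; ring
    · rw [coeff_mul_two, h0, h1, g0, g1]
      nlinarith [h2, g2]



private lemma key_identity (p a : Fin n → ℝ) (hp : ∑ i, p i = 1) (M : ℕ) :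
    (1 + C (∑ i, p i * a i) * X) ^ M =
      ∑ k ∈ piAntidiag (univ : Finset (Fin n)) M,
        (Nat.multinomial univ k : ℝ[X]) * ∏ i, (C (p i) * (1 + C (a i) * X)) ^ k i := by
  rw [← Finset.sum_pow_eq_sum_piAntidiag]
  congr 1
  have h1 : ∀ i ∈ (univ : Finset (Fin n)), C (p i) * (1 + C (a i) * X)
      = C (p i) + C (p i * a i) * X := by
    intro i _
    rw [map_mul]; ring
  rw [Finset.sum_congr rfl h1, Finset.sum_add_distrib, ← Finset.sum_mul, ← map_sum, ← map_sum,
    hp, map_one]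

private lemma term_coeff (p a : Fin n → ℝ) (k : Fin n → ℕ) (d : ℕ) :
    ((Nat.multinomial univ k : ℝ[X]) * ∏ i, (C (p i) * (1 + C (a i) * X)) ^ k i).coeff d
      = (Nat.multinomial univ k : ℝ) * (∏ i, p i ^ k i) *
        (∏ i, (1 + C (a i) * X) ^ k i).coeff d := by
  have : (∏ i, (C (p i) * (1 + C (a i) * X)) ^ k i)
      = C (∏ i, p i ^ k i) * ∏ i, (1 + C (a i) * X) ^ k i := by
    rw [map_prod, ← Finset.prod_mul_distrib]
    refine Finset.prod_congr rfl fun i _ => ?_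
    rw [mul_pow, map_pow]
  rw [this, ← Polynomial.C_eq_natCast, ← mul_assoc, ← map_mul, Polynomial.coeff_C_mul]


section
variable {n : ℕ}

private lemma moment1 (p a : Fin n → ℝ) (hp : ∑ i, p i = 1) (M : ℕ) :
    ∑ k ∈ piAntidiag (univ : Finset (Fin n)) M,
        (Nat.multinomial univ k : ℝ) * (∏ i, p i ^ k i) * (∑ i, (k i : ℝ) * a i)
      = M * ∑ i, p i * a i := by
  calc ∑ k ∈ piAntidiag (univ : Finset (Fin n)) M,
        (Nat.multinomial univ k : ℝ) * (∏ i, p i ^ k i) * (∑ i, (k i : ℝ) * a i)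
      = ∑ k ∈ piAntidiag (univ : Finset (Fin n)) M,
          ((Nat.multinomial univ k : ℝ[X]) * ∏ i, (C (p i) * (1 + C (a i) * X)) ^ k i).coeff 1 := by
        refine Finset.sum_congr rfl fun k _ => ?_
        rw [term_coeff, (prod_coeffs univ a k).2.1]
    _ = ((1 + C (∑ i, p i * a i) * X) ^ M).coeff 1 := by
        rw [← Polynomial.finset_sum_coeff, ← key_identity p a hp M]
    _ = M * ∑ i, p i * a i := (pow_coeffs _ M).2.1

private lemma moment2raw (p a : Fin n → ℝ) (hp : ∑ i, p i = 1) (M : ℕ) :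
    ∑ k ∈ piAntidiag (univ : Finset (Fin n)) M,
        (Nat.multinomial univ k : ℝ) * (∏ i, p i ^ k i) *
          ((∑ i, (k i : ℝ) * a i) ^ 2 - ∑ i, (k i : ℝ) * a i ^ 2)
      = ((M : ℝ) * ∑ i, p i * a i) ^ 2 - (M : ℝ) * (∑ i, p i * a i) ^ 2 := by
  calc ∑ k ∈ piAntidiag (univ : Finset (Fin n)) M,
        (Nat.multinomial univ k : ℝ) * (∏ i, p i ^ k i) *
          ((∑ i, (k i : ℝ) * a i) ^ 2 - ∑ i, (k i : ℝ) * a i ^ 2)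
      = ∑ k ∈ piAntidiag (univ : Finset (Fin n)) M,
          2 * ((Nat.multinomial univ k : ℝ[X]) *
            ∏ i, (C (p i) * (1 + C (a i) * X)) ^ k i).coeff 2 := by
        refine Finset.sum_congr rfl fun k _ => ?_
        rw [term_coeff]
        have h2 := (prod_coeffs univ a k).2.2
        linear_combination (-((Nat.multinomial univ k : ℝ) * ∏ i, p i ^ k i)) * h2
    _ = 2 * ((1 + C (∑ i, p i * a i) * X) ^ M).coeff 2 := by
        rw [← Finset.mul_sum, ← Polynomial.finset_sum_coeff, ← key_identity p a hp M]
    _ = ((M : ℝ) * ∑ i, p i * a i) ^ 2 - (M : ℝ) * (∑ i, p i * a i) ^ 2 :=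
        (pow_coeffs _ M).2.2

end

/-- The multinomial probability mass function with `M` trials and event
probabilities `p : Fin n → ℝ`, evaluated at a count vector `v : Fin n → ℕ`. -/
noncomputable def multinomialPMF (n M : ℕ) (p : Fin n → ℝ) (v : Fin n → ℕ) : ℝ :=
  if (∑ i, v i) = M then
    (Nat.factorial M : ℝ) / (∏ i, (Nat.factorial (v i) : ℝ)) * ∏ i, p i ^ v i
  else 0

/-- Second moment of the weighted-ensemble selection step in one bin:
`E[((ω(u)/N(u)) ∑ C_i g_i)²] = (1 - 1/N(u)) (∑ ω_i g_i)² + (ω(u)/N(u)) ∑ ω_i g_i²`. -/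
theorem selection_second_moment {n : ℕ} (ω g : Fin n → ℝ) (hω : ∀ i, 0 < ω i)
    (Nu : ℕ) (hNu : 1 ≤ Nu) :
    ∑' v : Fin n → ℕ,
        multinomialPMF n Nu (fun i => ω i / ∑ k, ω k) v *
          (((∑ k, ω k) / (Nu : ℝ)) * ∑ i, (v i : ℝ) * g i)^2 =
      (1 - 1 / (Nu : ℝ)) * (∑ i, ω i * g i)^2 +
        ((∑ k, ω k) / (Nu : ℝ)) * ∑ i, ω i * (g i)^2 := by
  have hNu0 : (Nu : ℝ) ≠ 0 := Nat.cast_ne_zero.mpr (by omega)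
  -- reduce the tsum to a finite sum over `piAntidiag univ Nu`
  have hsupp : ∀ v : Fin n → ℕ, v ∉ piAntidiag (univ : Finset (Fin n)) Nu →
      multinomialPMF n Nu (fun i => ω i / ∑ k, ω k) v *
        (((∑ k, ω k) / (Nu : ℝ)) * ∑ i, (v i : ℝ) * g i)^2 = 0 := by
    intro v hv
    have hvs : (∑ i, v i) ≠ Nu := by
      intro h
      exact hv (mem_piAntidiag.mpr ⟨h, fun i _ => mem_univ i⟩)
    rw [multinomialPMF, if_neg hvs, zero_mul]
  rw [tsum_eq_sum hsupp]
  rcases Nat.eq_zero_or_pos n with hn | hn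
  · subst hn
    have : piAntidiag (univ : Finset (Fin 0)) Nu = ∅ := by
      rw [Finset.eq_empty_iff_forall_notMem]
      intro v hv
      have := (mem_piAntidiag.mp hv).1
      simp at this
      omega
    rw [this]
    simp
  -- main case
  set W : ℝ := ∑ k, ω k with hWdef
  have hW : 0 < W := Finset.sum_pos (fun i _ => hω i) ⟨⟨0, hn⟩, mem_univ _⟩
  set p : Fin n → ℝ := fun i => ω i / W with hpdef
  have hp : ∑ i, p i = 1 := by
    rw [hpdef]
    simp only
    rw [← Finset.sum_div, div_self hW.ne']
  have hpmf : ∀ v ∈ piAntidiag (univ : Finset (Fin n)) Nu,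
      multinomialPMF n Nu p v = (Nat.multinomial univ v : ℝ) * ∏ i, p i ^ v i := by
    intro v hv
    have hvs : (∑ i, v i) = Nu := (mem_piAntidiag.mp hv).1
    rw [multinomialPMF, if_pos hvs]
    congr 1
    have hspec := Nat.multinomial_spec (univ : Finset (Fin n)) v
    rw [hvs] at hspec
    have hprod : (0 : ℝ) < ∏ i, (Nat.factorial (v i) : ℝ) :=
      Finset.prod_pos fun i _ => by exact_mod_cast Nat.factorial_pos (v i)
    rw [div_eq_iff hprod.ne', ← Nat.cast_prod, ← Nat.cast_mul, mul_comm, hspec]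
  have e1 := moment2raw p g hp Nu
  have e2 := moment1 p (fun i => g i ^ 2) hp Nu
  have key : ∑ v ∈ piAntidiag (univ : Finset (Fin n)) Nu,
      multinomialPMF n Nu p v * ((W / (Nu : ℝ)) * ∑ i, (v i : ℝ) * g i)^2
      = (W / (Nu : ℝ))^2 *
        ((((Nu : ℝ) * ∑ i, p i * g i) ^ 2 - (Nu : ℝ) * (∑ i, p i * g i) ^ 2)
          + (Nu : ℝ) * ∑ i, p i * g i ^ 2) := by
    rw [← e1, ← e2, ← Finset.sum_add_distrib, Finset.mul_sum]
    refine Finset.sum_congr rfl fun v hv => ?_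
    rw [hpmf v hv]
    ring
  rw [key]
  have hg1 : ∑ i, p i * g i = (∑ i, ω i * g i) / W := by
    rw [eq_div_iff hW.ne', Finset.sum_mul]
    refine Finset.sum_congr rfl fun i _ => ?_
    rw [hpdef]
    field_simp
  have hg2 : ∑ i, p i * g i ^ 2 = (∑ i, ω i * g i ^ 2) / W := by
    rw [eq_div_iff hW.ne', Finset.sum_mul]
    refine Finset.sum_congr rfl fun i _ => ?_
    rw [hpdef]
    field_simp
  rw [hg1, hg2]
  field_simp
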